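/- Fix reals α > 0 and 0 < β < 1 and an integer l ≥ 1, and define τ(d, q) = 1 if q divides d^l, and τ(d, q) = max{−α r^{−β}, −1} otherwise, where r = q / gcd(q, d^l). Then there exists a constant c_1 > 0 depending only on α and β such that for every δ ∈ (0, 1] there exist an integer s > 0, integers 1 = d_0 < d_1 < ... < d_s with d_s ≤ exp(c_1 δ^{−1/β}), and a real constant λ > 0, such that for every integer q ≥ 1, (1/Λ) ∑_{j=0}^{s} λ^j τ(d_j, q) ≥ −δ, where Λ = 1 + λ + ... + λ^s. -/

import Mathlib

/-- `τ(d, q) = 1` if `q ∣ d^l`, and `max{−a r^{−b}, −1}` otherwise, where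
`r = q / gcd(q, d^l)`. -/
noncomputable def tau (a b : ℝ) (l d q : ℕ) : ℝ :=
  if q ∣ d ^ l then 1
  else max (-(a * ((q / Nat.gcd q (d ^ l) : ℕ) : ℝ) ^ (-b))) (-1)

open Finset Nat

set_option maxHeartbeats 2000000


lemma tau_of_dvd (a b : ℝ) (l d q : ℕ) (h : q ∣ d ^ l) : tau a b l d q = 1 := if_pos h

lemma neg_one_le_tau (a b : ℝ) (l d q : ℕ) : -1 ≤ tau a b l d q := by
  unfold tau; split
  · norm_num
  · exact le_max_right _ _

lemma tau_ge (a b : ℝ) (l d q : ℕ) (ha : 0 ≤ a) (hb : 0 ≤ b) (h : ¬ q ∣ d ^ l)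
    {t : ℝ} (ht : 0 < t) (htr : t ≤ ((q / Nat.gcd q (d ^ l) : ℕ) : ℝ)) :
    -(a * t ^ (-b)) ≤ tau a b l d q := by
  unfold tau; rw [if_neg h]
  refine le_trans ?_ (le_max_left _ _)
  have h1 : ((q / Nat.gcd q (d ^ l) : ℕ) : ℝ) ^ (-b) ≤ t ^ (-b) :=
    Real.rpow_le_rpow_of_nonpos ht htr (neg_nonpos.mpr hb)
  have := mul_le_mul_of_nonneg_left h1 ha
  linarith

lemma geom_sum_le_inv (x : ℝ) (h0 : 0 ≤ x) (h1 : x < 1) (n : ℕ) :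
    ∑ j ∈ Finset.range n, x ^ j ≤ (1 - x)⁻¹ := by
  induction n with
  | zero =>
    simp only [Finset.range_zero, Finset.sum_empty]
    exact inv_nonneg.mpr (by linarith)
  | succ n ih =>
    rw [Finset.sum_range_succ'];
    have hx : x * ∑ j ∈ Finset.range n, x ^ j ≤ x * (1-x)⁻¹ := by
      exact mul_le_mul_of_nonneg_left ih h0
    have h2 : x * (1-x)⁻¹ + 1 ≤ (1-x)⁻¹ := by
      have h3 : (1-x)*(1-x)⁻¹ = 1 := mul_inv_cancel₀ (by linarith)
      nlinarith [h3]
    have h4 : ∑ i ∈ Finset.range n, x ^ (i+1) = x * ∑ j ∈ Finset.range n, x ^ j := by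
      rw [Finset.mul_sum]; exact Finset.sum_congr rfl fun i _ => by ring
    rw [h4, pow_zero]
    linarith

lemma geo2 (lam w c : ℝ) (hlam0 : 0 ≤ lam) (hc : 0 ≤ c) (hw : 0 < w)
    (hkey : 12 * c + 1 ≤ lam * w) :
    ∀ m : ℕ, ∑ j ∈ Finset.range m, lam ^ j * (c * (w⁻¹) ^ (m - j)) ≤ lam ^ m / 12 := by
  intro m
  induction m with
  | zero => simp
  | succ m ih =>
    rw [Finset.sum_range_succ]
    have h1 : ∀ j ∈ Finset.range m, lam ^ j * (c * (w⁻¹) ^ (m + 1 - j))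
        = w⁻¹ * (lam ^ j * (c * (w⁻¹) ^ (m - j))) := by
      intro j hj
      rw [Finset.mem_range] at hj
      have : m + 1 - j = (m - j) + 1 := by omega
      rw [this, pow_succ]; ring
    rw [Finset.sum_congr rfl h1, ← Finset.mul_sum]
    have h2 : w⁻¹ * ∑ j ∈ Finset.range m, lam ^ j * (c * (w⁻¹) ^ (m - j)) ≤ w⁻¹ * (lam ^ m / 12) :=
      mul_le_mul_of_nonneg_left ih (by positivity)
    have h3 : m + 1 - m = 1 := by omega
    rw [h3, pow_one]
    have hlm : (0:ℝ) ≤ lam ^ m := pow_nonneg hlam0 m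
    have h4 : w⁻¹ * (lam ^ m / 12) + lam ^ m * (c * w⁻¹) ≤ lam ^ (m+1) / 12 := by
      rw [pow_succ]
      rw [← sub_nonneg]
      have h5 : lam ^ m * lam / 12 - (w⁻¹ * (lam ^ m / 12) + lam ^ m * (c * w⁻¹))
          = lam ^ m * w⁻¹ * ((lam * w - 1 - 12 * c) / 12) := by
        field_simp; ring
      rw [h5]
      have : (0:ℝ) ≤ (lam * w - 1 - 12*c)/12 := by linarith
      positivity
    linarith


lemma primorial_factorization (p n : ℕ) (hp : p.Prime) :
    (primorial n).factorization p = if p ≤ n then 1 else 0 := by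
  unfold primorial
  rw [Nat.factorization_prod (fun q hq => ((Finset.mem_filter.mp hq).2.pos).ne')]
  rw [Finsupp.finset_sum_apply]
  have h1 : ∀ q ∈ Finset.filter Nat.Prime (Finset.range (n+1)),
      (Nat.factorization q) p = if q = p then 1 else 0 := by
    intro q hq
    rw [(Finset.mem_filter.mp hq).2.factorization]
    exact Finsupp.single_apply
  rw [Finset.sum_congr rfl h1, Finset.sum_ite_eq' _ p (fun _ => 1)]
  simp [Finset.mem_filter, Finset.mem_range, Nat.lt_succ_iff, hp]

lemma r_fact (q D : ℕ) (hq : q ≠ 0) (hD : D ≠ 0) (p : ℕ) :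
    (q / Nat.gcd q D).factorization p
      = q.factorization p - min (q.factorization p) (D.factorization p) := by
  rw [Nat.factorization_div (Nat.gcd_dvd_left q D), Finsupp.tsub_apply,
    Nat.factorization_gcd hq hD, Finsupp.inf_apply]

lemma r_pos (q D : ℕ) (hq : q ≠ 0) : 0 < q / Nat.gcd q D :=
  Nat.div_pos (Nat.le_of_dvd (Nat.pos_of_ne_zero hq) (Nat.gcd_dvd_left q D))
    (Nat.gcd_pos_of_pos_left D (Nat.pos_of_ne_zero hq))

lemma r_ge (q D : ℕ) (hq : q ≠ 0) (hD : D ≠ 0) (p : ℕ) (hp : p.Prime) (e : ℕ)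
    (h : D.factorization p + e ≤ q.factorization p) : p ^ e ≤ q / Nat.gcd q D := by
  have hr0 : q / Nat.gcd q D ≠ 0 := (r_pos q D hq).ne'
  have h2 : e ≤ (q / Nat.gcd q D).factorization p := by
    rw [r_fact q D hq hD p]; omega
  exact Nat.le_of_dvd (Nat.pos_of_ne_zero hr0)
    ((Nat.Prime.pow_dvd_iff_le_factorization hp hr0).mpr h2)

lemma not_dvd_of_fact (q D : ℕ) (hD : D ≠ 0) (p : ℕ)
    (h : D.factorization p < q.factorization p) : ¬ q ∣ D := by
  intro hdvd
  rcases Nat.eq_zero_or_pos q with h0 | h0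
  · subst h0; simp at h
  · have := ((Nat.factorization_le_iff_dvd h0.ne' hD).mpr hdvd) p
    omega

lemma exists_bad_prime {q N : ℕ} (hq : q ≠ 0) (hN : N ≠ 0) (h : ¬ q ∣ N) :
    ∃ p, p.Prime ∧ N.factorization p < q.factorization p := by
  by_contra hcon
  push_neg at hcon
  apply h
  rw [← Nat.factorization_le_iff_dvd hq hN]
  intro p
  by_cases hp : p.Prime
  · exact hcon p hp
  · simp [Nat.factorization_eq_zero_of_not_prime q hp]

lemma rpow_half_le {x y : ℝ} (hx : 0 ≤ x) (hy : 0 ≤ y) (h : x ≤ y^2) :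
    x ^ ((1:ℝ)/2) ≤ y := by
  calc x ^ ((1:ℝ)/2) ≤ (y^2) ^ ((1:ℝ)/2) := Real.rpow_le_rpow hx h (by norm_num)
  _ = y := by
      rw [← Real.rpow_natCast y 2, ← Real.rpow_mul hy]
      norm_num

lemma le_rpow_half {x y : ℝ} (hy : 0 ≤ y) (h : y^2 ≤ x) :
    y ≤ x ^ ((1:ℝ)/2) := by
  calc y = (y^2) ^ ((1:ℝ)/2) := by
        rw [← Real.rpow_natCast y 2, ← Real.rpow_mul hy]; norm_num
  _ ≤ x ^ ((1:ℝ)/2) := Real.rpow_le_rpow (by positivity) h (by norm_num)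

lemma two_pow_neg_b (b : ℝ) (L k : ℕ) :
    ((2:ℝ) ^ (L * k + 1 : ℕ)) ^ (-b)
      = (2:ℝ)^(-b) * (((2:ℝ) ^ ((L:ℝ) * b))⁻¹) ^ k := by
  have h2 : (0:ℝ) ≤ 2 := by norm_num
  rw [← Real.rpow_natCast (2:ℝ) (L*k+1), ← Real.rpow_mul h2,
    ← Real.rpow_neg h2, ← Real.rpow_natCast ((2:ℝ) ^ (-((L:ℝ)*b))) k,
    ← Real.rpow_mul h2, ← Real.rpow_add (by norm_num : (0:ℝ) < 2)]
  congr 1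
  push_cast
  ring

/-- averaging theorem. -/
theorem stmt_13 (a b : ℝ) (l : ℕ) (ha : 0 < a) (hb0 : 0 < b) (hb1 : b < 1) (hl : 1 ≤ l) :
    ∃ c1 : ℝ, 0 < c1 ∧ ∀ δ : ℝ, 0 < δ → δ ≤ 1 →
      ∃ s : ℕ, 0 < s ∧ ∃ d : ℕ → ℕ,
        d 0 = 1 ∧ (∀ j, j < s → d j < d (j + 1)) ∧
        (d s : ℝ) ≤ Real.exp (c1 * δ ^ (-(1 / b))) ∧
        ∃ lam : ℝ, 0 < lam ∧ ∀ q : ℕ, 1 ≤ q →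
          -δ ≤ (∑ j ∈ Finset.range (s + 1), lam ^ j)⁻¹ *
              ∑ j ∈ Finset.range (s + 1), lam ^ j * tau a b l (d j) q := by
  have hlogb2 : 0 ≤ Real.logb 2 (1 + a) := Real.logb_nonneg (by norm_num) (by linarith)
  set L : ℕ := ⌈(5 + Real.logb 2 (1 + a)) / b⌉₊ with hLdef
  have hL1 : 1 ≤ L := Nat.one_le_ceil_iff.mpr (by positivity)
  have hLge : (5 + Real.logb 2 (1 + a)) / b ≤ (L : ℝ) := Nat.le_ceil _
  have hLb : 5 + Real.logb 2 (1 + a) ≤ (L:ℝ) * b := (div_le_iff₀ hb0).mp hLge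
  have hL5b : 5 / b ≤ (L:ℝ) := by
    refine le_trans ?_ hLge
    gcongr
    linarith
  refine ⟨(L : ℝ) * (8 * (32*a) ^ ((1:ℝ)/b) + 26) * Real.log 4 + 1, ?_, ?_⟩
  · have h1 : (0:ℝ) ≤ Real.log 4 := Real.log_nonneg (by norm_num)
    have h2 : (0:ℝ) ≤ (L : ℝ) * (8 * (32*a) ^ ((1:ℝ)/b) + 26) * Real.log 4 := by positivity
    linarith
  intro δ hδ0 hδ1
  -- basic constants
  set lam : ℝ := 3/4 with hlamdef
  have hlam0 : (0:ℝ) < lam := by norm_num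
  have hlam1 : lam < 1 := by norm_num
  set ρ : ℝ := lam ^ ((1:ℝ)/2) with hρdef
  have hρ0 : 0 < ρ := Real.rpow_pos_of_pos hlam0 _
  have hρle : ρ ≤ 7/8 := rpow_half_le hlam0.le (by norm_num) (by norm_num)
  have hρge : 3/4 ≤ ρ := le_rpow_half (by norm_num) (by norm_num)
  have hρsq : ρ * ρ = lam := by
    rw [hρdef, ← Real.rpow_add hlam0]; norm_num
  set θ : ℝ := lam ^ (1/(2*b)) with hθdef
  have hθ0 : 0 < θ := Real.rpow_pos_of_pos hlam0 _
  have hθρ : θ ≤ ρ := by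
    rw [hθdef, hρdef]
    apply Real.rpow_le_rpow_of_exponent_ge hlam0 hlam1.le
    rw [div_le_div_iff₀ (by norm_num) (by linarith)]
    linarith
  have hθ1 : θ ≤ 7/8 := hθρ.trans hρle
  have hθρb : ∀ i : ℕ, (θ ^ i) ^ b = ρ ^ i := by
    intro i
    rw [hθdef, hρdef, ← Real.rpow_natCast (lam ^ (1/(2*b))) i,
      ← Real.rpow_natCast (lam ^ ((1:ℝ)/2)) i,
      ← Real.rpow_mul hlam0.le, ← Real.rpow_mul hlam0.le, ← Real.rpow_mul hlam0.le]
    congr 1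
    field_simp
  -- the quantity w = 2^(L*b)
  set w : ℝ := (2:ℝ) ^ ((L:ℝ) * b) with hwdef
  have hw0 : 0 < w := Real.rpow_pos_of_pos (by norm_num) _
  have hw32 : 32 * (1 + a) ≤ w := by
    calc 32 * (1+a) = 2^(5:ℝ) * 2^(Real.logb 2 (1+a)) := by
          rw [Real.rpow_logb (by norm_num) (by norm_num) (by linarith)]
          norm_num
    _ = 2 ^ (5 + Real.logb 2 (1+a)) := (Real.rpow_add (by norm_num) _ _).symm
    _ ≤ w := Real.rpow_le_rpow_of_exponent_le (by norm_num) hLb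
  have hwlam : 24 * (1 + a) ≤ lam * w := by
    rw [hlamdef]; nlinarith
  have h2bneg : (2:ℝ) ^ (-b) ≤ 1 :=
    Real.rpow_le_one_of_one_le_of_nonpos (by norm_num) (by linarith)
  have h2bneg0 : (0:ℝ) < (2:ℝ)^(-b) := Real.rpow_pos_of_pos (by norm_num) _
  have hgeo2key : 12 * (a * (2:ℝ)^(-b)) + 1 ≤ lam * w := by nlinarith
  -- 2^L * θ ≥ 2
  have hLtheta : (2:ℝ) ≤ 2 ^ (L:ℕ) * θ := by
    have h1 : (2:ℝ)^(-(1/(2*b))) ≤ θ := by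
      rw [hθdef]
      have : (2:ℝ)^(-(1/(2*b))) = ((2:ℝ)⁻¹) ^ (1/(2*b)) := by
        rw [← Real.rpow_neg_one (2:ℝ), ← Real.rpow_mul (by norm_num)]
        norm_num
      rw [this]
      apply Real.rpow_le_rpow (by norm_num) (by norm_num) (by positivity)
    have h2 : (2:ℝ) ^ (L:ℕ) = (2:ℝ) ^ ((L:ℕ):ℝ) := (Real.rpow_natCast 2 L).symm
    calc (2:ℝ) = 2 ^ (1:ℝ) := (Real.rpow_one 2).symm
    _ ≤ 2 ^ (((L:ℕ):ℝ) + (-(1/(2*b)))) := by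
        apply Real.rpow_le_rpow_of_exponent_le (by norm_num)
        have hub : (1:ℝ) ≤ 1/b := by
          rw [le_div_iff₀ hb0]; linarith
        have h3 : 1/(2*b) = (1/b)/2 := by ring
        rw [h3]
        have h4 : 5/b = 5*(1/b) := by ring
        rw [h4] at hL5b
        linarith
    _ = 2 ^ ((L:ℕ):ℝ) * 2^(-(1/(2*b))) := Real.rpow_add (by norm_num) _ _
    _ ≤ 2 ^ (L:ℕ) * θ := by
        rw [h2]
        exact mul_le_mul_of_nonneg_left h1 (by positivity)
  -- s
  set s : ℕ := ⌈Real.logb (4/3) (4/δ)⌉₊ with hsdef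
  have h4δ1 : (1:ℝ) < 4/δ := by rw [lt_div_iff₀ hδ0]; linarith
  have hs1 : 1 ≤ s := Nat.one_le_ceil_iff.mpr (Real.logb_pos (by norm_num) h4δ1)
  have hlams : lam ^ s ≤ δ/4 := by
    have h1 : Real.logb (4/3) (4/δ) ≤ (s:ℝ) := Nat.le_ceil _
    have h2 : (4/δ:ℝ) ≤ (4/3:ℝ) ^ (s:ℕ) := by
      calc (4/δ:ℝ) = (4/3:ℝ) ^ Real.logb (4/3) (4/δ) :=
            (Real.rpow_logb (by norm_num) (by norm_num) (by positivity)).symm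
      _ ≤ (4/3:ℝ) ^ ((s:ℕ):ℝ) := Real.rpow_le_rpow_of_exponent_le (by norm_num) h1
      _ = (4/3:ℝ) ^ (s:ℕ) := Real.rpow_natCast _ _
    have h3 : lam ^ s = ((4/3:ℝ) ^ s)⁻¹ := by
      rw [← inv_pow]; norm_num
    rw [h3]
    rw [inv_le_comm₀ (by positivity) (by positivity)]
    calc (δ/4)⁻¹ = 4/δ := by rw [inv_div]
    _ ≤ (4/3:ℝ)^s := h2
  -- X and M
  set X : ℝ := (32*a/δ) ^ ((1:ℝ)/b) with hXdef
  have hX0 : 0 < X := Real.rpow_pos_of_pos (by positivity) _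
  have hXb : X ^ b = 32*a/δ := by
    rw [hXdef, ← Real.rpow_mul (by positivity), one_div, inv_mul_cancel₀ hb0.ne', Real.rpow_one]
  set M : ℕ → ℕ := fun i => max 2 ⌈X * θ ^ i⌉₊ with hMdef
  have hM2 : ∀ i, 2 ≤ M i := fun i => le_max_left _ _
  have hmanti : ∀ i j, i ≤ j → M j ≤ M i := by
    intro i j hij
    apply max_le_max le_rfl
    apply Nat.ceil_le_ceil
    apply mul_le_mul_of_nonneg_left _ hX0.le
    exact pow_le_pow_of_le_one hθ0.le (by linarith) hij
  have hMge : ∀ i, X * θ ^ i ≤ (M i : ℝ) := by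
    intro i
    calc X * θ^i ≤ (⌈X * θ ^ i⌉₊ : ℝ) := Nat.le_ceil _
    _ ≤ ((max 2 ⌈X * θ ^ i⌉₊ : ℕ) : ℝ) := by exact_mod_cast Nat.cast_le.mpr (le_max_right _ _)
  have hMle : ∀ i, (M i : ℝ) ≤ X * θ ^ i + 2 := by
    intro i
    rw [hMdef]
    push_cast
    have hnn : (0:ℝ) ≤ X * θ ^ i := by positivity
    apply max_le (by linarith)
    have := (Nat.ceil_lt_add_one hnn).le
    linarith
  have hbudget : ∀ j : ℕ, a * (M (j+1) : ℝ) ^ (-b) ≤ δ/32 * (ρ ^ (j+1))⁻¹ := by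
    intro j
    have h1 : (32*a/δ) * ρ^(j+1) ≤ (M (j+1):ℝ) ^ b := by
      rw [← hXb, ← hθρb (j+1), ← Real.mul_rpow hX0.le (by positivity)]
      exact Real.rpow_le_rpow (by positivity) (hMge (j+1)) hb0.le
    rw [Real.rpow_neg (Nat.cast_nonneg _)]
    have h2 : ((M (j+1):ℝ)^b)⁻¹ ≤ ((32*a/δ) * ρ^(j+1))⁻¹ := by
      apply inv_anti₀ (by positivity) h1
    calc a * ((M (j+1):ℝ)^b)⁻¹ ≤ a * ((32*a/δ) * ρ^(j+1))⁻¹ :=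
          mul_le_mul_of_nonneg_left h2 ha.le
    _ = δ/32 * (ρ^(j+1))⁻¹ := by
        rw [mul_inv]
        rw [div_eq_mul_inv, div_eq_mul_inv]
        rw [mul_inv, inv_inv]
        field_simp
  -- the sequence d
  set d : ℕ → ℕ := fun j => ∏ i ∈ Finset.Icc 1 j, (primorial (M i))^L with hddef
  have hd0 : d 0 = 1 := by simp [hddef]
  have hdsucc : ∀ j, d (j+1) = d j * (primorial (M (j+1)))^L := by
    intro j
    show (∏ i ∈ Finset.Icc 1 (j+1), (primorial (M i))^L) = _
    exact Finset.prod_Icc_succ_top (Nat.le_add_left 1 j) _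
  have hdpos : ∀ j, 0 < d j := by
    intro j
    exact Finset.prod_pos fun i _ => pow_pos (primorial_pos _) L
  have hprim2 : ∀ m : ℕ, 2 ≤ m → 2 ≤ primorial m := by
    intro m hm
    apply Nat.le_of_dvd (primorial_pos m)
    unfold primorial
    apply Finset.dvd_prod_of_mem
    simp [Finset.mem_filter, Finset.mem_range, Nat.lt_succ_iff, hm, Nat.prime_two]
  have hdeq : ∀ j, d j = ∏ i ∈ Finset.Icc 1 j, (primorial (M i))^L := fun j => rfl
  have hdmono : ∀ i j, i ≤ j → d i ∣ d j := by
    intro i j hij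
    rw [hdeq i, hdeq j]
    exact Finset.prod_dvd_prod_of_subset _ _ _ (Finset.Icc_subset_Icc le_rfl hij)
  have hdlt : ∀ j, d j < d (j+1) := by
    intro j
    rw [hdsucc j]
    apply Nat.lt_mul_iff_one_lt_right (hdpos j) |>.mpr
    calc 1 < 2 := one_lt_two
    _ ≤ primorial (M (j+1)) := hprim2 _ (hM2 _)
    _ ≤ (primorial (M (j+1)))^L := Nat.le_self_pow (by omega) _
  -- valuation of d
  have hdfact : ∀ (p : ℕ), p.Prime → ∀ t : ℕ, (∀ i, 1 ≤ i → i ≤ t → p ≤ M i) →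
      (d t).factorization p = L * t := by
    intro p hp t
    induction t with
    | zero => intro _; rw [hd0]; simp
    | succ n ih =>
      intro h
      rw [hdsucc n, Nat.factorization_mul (hdpos n).ne' (pow_pos (primorial_pos _) L).ne',
        Finsupp.add_apply, ih (fun i h1 h2 => h i h1 (h2.trans (Nat.le_succ n))),
        Nat.factorization_pow, Finsupp.smul_apply, primorial_factorization _ _ hp,
        if_pos (h (n+1) (by omega) le_rfl)]
      ring
  refine ⟨s, hs1, d, hd0, fun j _ => hdlt j, ?_, lam, hlam0, ?_⟩
  · -- size bound on d s
    have hbinv : (1:ℝ) ≤ 1/b := by rw [le_div_iff₀ hb0]; linarith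
    have hE1 : (1:ℝ) ≤ δ ^ (-(1/b)) := by
      calc (1:ℝ) = δ ^ (0:ℝ) := (Real.rpow_zero δ).symm
      _ ≤ δ ^ (-(1/b)) := Real.rpow_le_rpow_of_exponent_ge hδ0 hδ1 (by linarith)
    have hE0 : (0:ℝ) < δ ^ (-(1/b)) := by linarith
    have hds4 : d s ≤ 4 ^ ((∑ i ∈ Finset.Icc 1 s, M i) * L) := by
      rw [hdeq s]
      calc ∏ i ∈ Finset.Icc 1 s, (primorial (M i))^L
          ≤ ∏ i ∈ Finset.Icc 1 s, (4 ^ (M i))^L := by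
            apply Finset.prod_le_prod'
            intro i _
            exact Nat.pow_le_pow_left (primorial_le_4_pow (M i)) L
      _ = ∏ i ∈ Finset.Icc 1 s, 4 ^ (M i * L) := by
            apply Finset.prod_congr rfl
            intro i _
            rw [pow_mul]
      _ = 4 ^ (∑ i ∈ Finset.Icc 1 s, M i * L) := Finset.prod_pow_eq_pow_sum _ _ _
      _ = 4 ^ ((∑ i ∈ Finset.Icc 1 s, M i) * L) := by rw [Finset.sum_mul]
    -- bound ∑ M i
    have hXE : X = (32*a) ^ ((1:ℝ)/b) * δ ^ (-(1/b)) := by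
      rw [hXdef, Real.div_rpow (by positivity) hδ0.le, Real.rpow_neg hδ0.le, div_eq_mul_inv]
    have hsumθ : ∑ i ∈ Finset.Icc 1 s, θ ^ i ≤ 8 := by
      calc ∑ i ∈ Finset.Icc 1 s, θ ^ i ≤ ∑ i ∈ Finset.range (s+1), θ ^ i := by
            apply Finset.sum_le_sum_of_subset_of_nonneg
            · intro i hi
              rw [Finset.mem_Icc] at hi
              rw [Finset.mem_range]
              omega
            · intro i _ _
              positivity
      _ ≤ (1 - θ)⁻¹ := geom_sum_le_inv θ hθ0.le (by linarith) _
      _ ≤ 8 := by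
            rw [inv_le_comm₀ (by linarith) (by norm_num)]
            linarith
    have hsumM : (∑ i ∈ Finset.Icc 1 s, M i : ℝ) ≤ (8 * (32*a) ^ ((1:ℝ)/b) + 26) * δ ^ (-(1/b)) := by
      have h1 : (∑ i ∈ Finset.Icc 1 s, M i : ℝ) = ∑ i ∈ Finset.Icc 1 s, (M i : ℝ) := by
        push_cast; ring
      have h2 : ∑ i ∈ Finset.Icc 1 s, (M i:ℝ) ≤ ∑ i ∈ Finset.Icc 1 s, (X * θ^i + 2) :=
        Finset.sum_le_sum fun i _ => hMle i
      have h3 : ∑ i ∈ Finset.Icc 1 s, (X * θ^i + 2) = X * (∑ i ∈ Finset.Icc 1 s, θ^i) + 2*s := by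
        rw [Finset.sum_add_distrib, ← Finset.mul_sum, Finset.sum_const, Nat.card_Icc]
        simp
        ring
      -- bound on s
      have hlog43 : (1:ℝ)/4 ≤ Real.log (4/3) := by
        have h4 : Real.log (3/4) ≤ 3/4 - 1 := Real.log_le_sub_one_of_pos (by norm_num)
        have h5 : Real.log (4/3) = - Real.log (3/4) := by
          rw [← Real.log_inv]
          norm_num
        linarith
      have hlog4 : Real.log 4 ≤ 2 := by
        have h4 : Real.log 2 ≤ 1 := by
          have := Real.log_le_sub_one_of_pos (by norm_num : (0:ℝ) < 2)
          linarith
        have h5 : Real.log 4 = 2 * Real.log 2 := by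
          rw [show (4:ℝ) = 2^(2:ℕ) by norm_num, Real.log_pow]
          norm_num
        linarith
      have hlogδ : Real.log (4/δ) ≤ 2 + δ ^ (-(1/b)) := by
        rw [Real.log_div (by norm_num) hδ0.ne']
        have h4 : - Real.log δ = Real.log δ⁻¹ := (Real.log_inv δ).symm
        have h5 : Real.log δ⁻¹ ≤ δ⁻¹ - 1 := Real.log_le_sub_one_of_pos (by positivity)
        have h6 : δ⁻¹ ≤ δ ^ (-(1/b)) := by
          rw [← Real.rpow_neg_one δ]
          exact Real.rpow_le_rpow_of_exponent_ge hδ0 hδ1 (by linarith)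
        linarith
      have hsle : (s:ℝ) ≤ 13 * δ ^ (-(1/b)) := by
        have h4 : (s:ℝ) ≤ Real.logb (4/3) (4/δ) + 1 := by
          have := (Nat.ceil_lt_add_one (Real.logb_nonneg (b := 4/3) (by norm_num) h4δ1.le)).le
          rw [hsdef]
          exact this
        have h5 : Real.logb (4/3) (4/δ) ≤ 4 * Real.log (4/δ) := by
          have hc : (0:ℝ) < Real.log (4/3) := by linarith
          rw [Real.logb, div_le_iff₀ hc]
          have hpos : 0 ≤ Real.log (4/δ) := Real.log_nonneg (by
            rw [le_div_iff₀ hδ0]; linarith)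
          nlinarith
        have h6 : Real.log (4/δ) ≤ 2 + δ ^ (-(1/b)) := hlogδ
        nlinarith [hE1]
      have h7 : X * (∑ i ∈ Finset.Icc 1 s, θ^i) ≤ 8 * (32*a) ^ ((1:ℝ)/b) * δ ^ (-(1/b)) := by
        rw [hXE]
        have h8 : (0:ℝ) ≤ (32*a) ^ ((1:ℝ)/b) * δ ^ (-(1/b)) := by positivity
        calc (32*a) ^ ((1:ℝ)/b) * δ ^ (-(1/b)) * (∑ i ∈ Finset.Icc 1 s, θ^i)
            ≤ (32*a) ^ ((1:ℝ)/b) * δ ^ (-(1/b)) * 8 := by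
              exact mul_le_mul_of_nonneg_left hsumθ h8
        _ = 8 * (32*a) ^ ((1:ℝ)/b) * δ ^ (-(1/b)) := by ring
      rw [h1]
      calc ∑ i ∈ Finset.Icc 1 s, (M i:ℝ) ≤ X * (∑ i ∈ Finset.Icc 1 s, θ^i) + 2*s := by
            rw [h3] at h2
            exact h2
      _ ≤ 8 * (32*a) ^ ((1:ℝ)/b) * δ ^ (-(1/b)) + 2 * (13 * δ ^ (-(1/b))) := by linarith
      _ = (8 * (32*a) ^ ((1:ℝ)/b) + 26) * δ ^ (-(1/b)) := by ring
    -- conclude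
    have hcast : ((4:ℕ) ^ ((∑ i ∈ Finset.Icc 1 s, M i) * L) : ℝ)
        = Real.exp ((((∑ i ∈ Finset.Icc 1 s, M i) * L : ℕ):ℝ) * Real.log 4) := by
      rw [← Real.log_pow]
      rw [Real.exp_log (by positivity)]
      push_cast
      ring
    calc (d s : ℝ) ≤ ((4:ℕ) ^ ((∑ i ∈ Finset.Icc 1 s, M i) * L) : ℝ) := by exact_mod_cast hds4
    _ = Real.exp ((((∑ i ∈ Finset.Icc 1 s, M i) * L : ℕ):ℝ) * Real.log 4) := hcast
    _ ≤ Real.exp (((L : ℝ) * (8 * (32*a) ^ ((1:ℝ)/b) + 26) * Real.log 4 + 1) * δ ^ (-(1/b))) := by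
        apply Real.exp_le_exp.mpr
        have hlog4pos : (0:ℝ) ≤ Real.log 4 := Real.log_nonneg (by norm_num)
        have h9 : (((∑ i ∈ Finset.Icc 1 s, M i) * L : ℕ):ℝ)
            = (∑ i ∈ Finset.Icc 1 s, M i : ℝ) * (L:ℝ) := by push_cast; ring
        rw [h9]
        have h10 : (∑ i ∈ Finset.Icc 1 s, M i : ℝ) * (L:ℝ) * Real.log 4
            ≤ ((8 * (32*a) ^ ((1:ℝ)/b) + 26) * δ ^ (-(1/b))) * (L:ℝ) * Real.log 4 := by
          have hL0 : (0:ℝ) ≤ (L:ℝ) := Nat.cast_nonneg _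
          apply mul_le_mul_of_nonneg_right _ hlog4pos
          exact mul_le_mul_of_nonneg_right hsumM hL0
        calc (∑ i ∈ Finset.Icc 1 s, M i : ℝ) * (L:ℝ) * Real.log 4
            ≤ ((8 * (32*a) ^ ((1:ℝ)/b) + 26) * δ ^ (-(1/b))) * (L:ℝ) * Real.log 4 := h10
        _ = ((L : ℝ) * (8 * (32*a) ^ ((1:ℝ)/b) + 26) * Real.log 4) * δ ^ (-(1/b)) := by ring
        _ ≤ ((L : ℝ) * (8 * (32*a) ^ ((1:ℝ)/b) + 26) * Real.log 4 + 1) * δ ^ (-(1/b)) := by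
            apply mul_le_mul_of_nonneg_right _ hE0.le
            linarith
  · -- main per-q estimate
    intro q hq
    have hq0 : q ≠ 0 := by omega
    have hdl0 : ∀ j, (d j)^l ≠ 0 := fun j => (pow_pos (hdpos j) l).ne'
    have hΛ1 : (1:ℝ) ≤ ∑ j ∈ Finset.range (s+1), lam ^ j := by
      have h0 : lam ^ 0 ≤ ∑ j ∈ Finset.range (s+1), lam ^ j :=
        Finset.single_le_sum (f := fun j => lam ^ j) (fun i _ => pow_nonneg hlam0.le i)
          (Finset.mem_range.mpr (by omega))
      simpa using h0
    -- the generic lower bound on r_j via a prime p active up to level k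
    have hRlow : ∀ (p : ℕ), p.Prime → ∀ (k : ℕ), (∀ i, 1 ≤ i → i ≤ k → p ≤ M i) →
        l*(L*k) < q.factorization p →
        ∀ j, j ≤ k → p ^ (L*(k-j)+1) ≤ q / Nat.gcd q ((d j)^l) ∧ ¬ q ∣ (d j)^l := by
      intro p hp k hple hflt j hj
      have hvdj : (d j).factorization p = L * j :=
        hdfact p hp j (fun i u v => hple i u (v.trans hj))
      have hfdj : ((d j)^l).factorization p = l * (L*j) := by
        rw [Nat.factorization_pow, Finsupp.smul_apply, smul_eq_mul, hvdj]
      have harith : l*(L*j) + (L*(k-j)+1) ≤ q.factorization p := by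
        have h1 : L*(k-j) ≤ l*(L*(k-j)) := Nat.le_mul_of_pos_left _ (by omega)
        have h2 : l*(L*j) + l*(L*(k-j)) = l*(L*k) := by
          rw [← Nat.mul_add, ← Nat.mul_add, Nat.add_sub_cancel' hj]
        calc l*(L*j) + (L*(k-j)+1) ≤ l*(L*j) + (l*(L*(k-j))+1) :=
              Nat.add_le_add_left (Nat.add_le_add_right h1 1) _
        _ = l*(L*k) + 1 := by rw [← Nat.add_assoc, h2]
        _ ≤ q.factorization p := hflt
      constructor
      · exact r_ge q _ hq0 (hdl0 j) p hp _ (by rw [hfdj]; exact harith)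
      · apply not_dvd_of_fact q _ (hdl0 j) p
        rw [hfdj]
        exact lt_of_lt_of_le (Nat.lt_add_of_pos_right (by omega)) harith
    -- tau lower bound from a power-of-two lower bound on r_j
    have htauw : ∀ (j m : ℕ), ¬ q ∣ (d j)^l → ((2:ℕ)^(L*m+1) : ℕ) ≤ q / Nat.gcd q ((d j)^l) →
        -((a * (2:ℝ)^(-b)) * (w⁻¹)^m) ≤ tau a b l (d j) q := by
      intro j m hnd hle
      have hcast : ((2:ℝ)^(L*m+1 : ℕ)) ≤ ((q / Nat.gcd q ((d j)^l) : ℕ) : ℝ) := by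
        calc ((2:ℝ)^(L*m+1:ℕ)) = (((2:ℕ)^(L*m+1):ℕ):ℝ) := by push_cast; ring
        _ ≤ _ := Nat.cast_le.mpr hle
      have h1 := tau_ge a b l (d j) q ha.le hb0.le hnd
        (t := ((2:ℝ)^(L*m+1 : ℕ))) (by positivity) hcast
      rw [two_pow_neg_b b L m, ← hwdef] at h1
      calc -((a * (2:ℝ)^(-b)) * (w⁻¹)^m) = -(a * ((2:ℝ)^(-b) * (w⁻¹)^m)) := by ring
      _ ≤ tau a b l (d j) q := h1
    -- negative block sum bound: for any k ≤ s, if levels < k admit the power bound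
    have hNegBlock : ∀ (p : ℕ), p.Prime → ∀ (k : ℕ), k ≤ s → (∀ i, 1 ≤ i → i ≤ k → p ≤ M i) →
        l*(L*k) < q.factorization p →
        -(13/12 * lam^k) ≤ ∑ j ∈ Finset.range (k+1), lam^j * tau a b l (d j) q := by
      intro p hp k hks hple hflt
      have hstep : ∀ j, j < k → -(lam^j * ((a * (2:ℝ)^(-b)) * (w⁻¹)^(k-j)))
          ≤ lam^j * tau a b l (d j) q := by
        intro j hj
        obtain ⟨hr, hnd⟩ := hRlow p hp k hple hflt j hj.le
        have h2 : ((2:ℕ)^(L*(k-j)+1) : ℕ) ≤ q / Nat.gcd q ((d j)^l) :=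
          le_trans (Nat.pow_le_pow_left hp.two_le _) hr
        have h3 := htauw j (k-j) hnd h2
        have h4 := mul_le_mul_of_nonneg_left h3 (pow_nonneg hlam0.le j)
        calc -(lam^j * ((a * (2:ℝ)^(-b)) * (w⁻¹)^(k-j)))
            = lam^j * (-((a * (2:ℝ)^(-b)) * (w⁻¹)^(k-j))) := by ring
        _ ≤ lam^j * tau a b l (d j) q := h4
      rw [Finset.sum_range_succ]
      have h5 : -(lam^k) ≤ lam^k * tau a b l (d k) q := by
        have := mul_le_mul_of_nonneg_left (neg_one_le_tau a b l (d k) q) (pow_nonneg hlam0.le k)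
        calc -(lam^k) = lam^k * (-1) := by ring
        _ ≤ _ := this
      have h6 : -(lam^k/12) ≤ ∑ j ∈ Finset.range k, lam^j * tau a b l (d j) q := by
        have h7 : ∑ j ∈ Finset.range k, -(lam^j * ((a * (2:ℝ)^(-b)) * (w⁻¹)^(k-j)))
            ≤ ∑ j ∈ Finset.range k, lam^j * tau a b l (d j) q :=
          Finset.sum_le_sum fun j hj => hstep j (Finset.mem_range.mp hj)
        have h8 : ∑ j ∈ Finset.range k, lam^j * ((a * (2:ℝ)^(-b)) * (w⁻¹)^(k-j)) ≤ lam^k/12 :=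
          geo2 lam w (a * (2:ℝ)^(-b)) hlam0.le (by positivity) hw0 hgeo2key k
        have h9 : ∑ j ∈ Finset.range k, -(lam^j * ((a * (2:ℝ)^(-b)) * (w⁻¹)^(k-j)))
            = -∑ j ∈ Finset.range k, lam^j * ((a * (2:ℝ)^(-b)) * (w⁻¹)^(k-j)) := by
          rw [← Finset.sum_neg_distrib]
        rw [h9] at h7
        linarith
      linarith
    have key : -δ ≤ ∑ j ∈ Finset.range (s+1), lam ^ j * tau a b l (d j) q := by
      by_cases hdvd : q ∣ (d s)^l
      · -- Branch 1 : q divides d_s^l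
        have hex : ∃ j, q ∣ (d j)^l := ⟨s, hdvd⟩
        have hj0s : Nat.find hex ≤ s := Nat.find_le hdvd
        set j0 := Nat.find hex with hj0def
        have hup : ∀ j, j0 ≤ j → tau a b l (d j) q = 1 := by
          intro j hj
          exact tau_of_dvd _ _ _ _ _
            ((Nat.find_spec hex).trans (pow_dvd_pow_of_dvd (hdmono _ _ hj) l))
        rcases Nat.eq_zero_or_pos j0 with hj00 | hj0pos
        · have hnn : (0:ℝ) ≤ ∑ j ∈ Finset.range (s+1), lam ^ j * tau a b l (d j) q := by
            apply Finset.sum_nonneg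
            intro j _
            rw [hup j (by omega)]
            positivity
          linarith
        · set k := j0 - 1 with hkdef
          have hj0k : j0 = k + 1 := by omega
          have hnd : ¬ q ∣ (d k)^l := Nat.find_min hex (by omega)
          obtain ⟨p, hp, hpfac⟩ := exists_bad_prime hq0 (hdl0 k) hnd
          have hfk : l * ((d k).factorization p) < q.factorization p := by
            rwa [Nat.factorization_pow, Finsupp.smul_apply, smul_eq_mul] at hpfac
          have hpMj0 : p ≤ M j0 := by
            by_contra hcon
            push_neg at hcon
            have h1 : q ∣ (d j0)^l := Nat.find_spec hex
            have h2 : q.factorization p ≤ l * (d j0).factorization p := by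
              have h2' := (Nat.factorization_le_iff_dvd hq0 (hdl0 j0)).mpr h1 p
              rwa [Nat.factorization_pow, Finsupp.smul_apply, smul_eq_mul] at h2'
            have h3 : (d j0).factorization p = (d k).factorization p := by
              rw [hj0k, hdsucc k,
                Nat.factorization_mul (hdpos k).ne' (pow_pos (primorial_pos _) L).ne',
                Finsupp.add_apply, Nat.factorization_pow, Finsupp.smul_apply, smul_eq_mul,
                primorial_factorization _ _ hp, if_neg (by rw [← hj0k]; omega)]
              simp
            rw [h3] at h2
            omega
          have hpMle : ∀ i, 1 ≤ i → i ≤ k → p ≤ M i := fun i _ h2 =>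
            hpMj0.trans (hmanti i j0 (by omega))
          have hvdk : (d k).factorization p = L * k := hdfact p hp k hpMle
          have hfk' : l*(L*k) < q.factorization p := by rw [← hvdk]; exact hfk
          -- split the sum
          have hsplit : ∑ j ∈ Finset.range (s+1), lam ^ j * tau a b l (d j) q
              = (∑ j ∈ Finset.range (k+1), lam ^ j * tau a b l (d j) q)
                + ∑ j ∈ Finset.Ico (k+1) (s+1), lam ^ j * tau a b l (d j) q := by
            rw [Finset.range_eq_Ico, ← Finset.sum_Ico_consecutive _ (by omega : 0 ≤ k+1) (by omega : k+1 ≤ s+1), ← Finset.range_eq_Ico]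
          have hneg := hNegBlock p hp k (by omega) hpMle hfk'
          have hpos : ∑ j ∈ Finset.Ico (k+1) (s+1), lam ^ j * tau a b l (d j) q
              = ∑ j ∈ Finset.Ico (k+1) (s+1), lam ^ j := by
            apply Finset.sum_congr rfl
            intro j hj
            rw [Finset.mem_Ico] at hj
            rw [hup j (by omega), mul_one]
          rcases eq_or_lt_of_le (show k+1 ≤ s by omega) with hks | hks
          · -- j0 = s
            have hpos2 : ∑ j ∈ Finset.Ico (k+1) (s+1), lam ^ j = lam^(k+1) := by
              rw [← hks, Finset.Ico_add_one_right_eq_Icc, Finset.Icc_self, Finset.sum_singleton]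
            have he1 : lam^(k+1) = 3/4 * lam^k := by
              rw [pow_succ, hlamdef]; ring
            have hlamk0 : (0:ℝ) ≤ lam^k := pow_nonneg hlam0.le k
            have he2 : lam^(k+1) ≤ δ/4 := by rw [← hks] at hlams; exact hlams
            rw [hsplit, hpos, hpos2]
            linarith [hneg]
          · -- j0 < s
            have hsub : {k+1, k+2} ⊆ Finset.Ico (k+1) (s+1) := by
              intro x hx
              simp only [Finset.mem_insert, Finset.mem_singleton] at hx
              rw [Finset.mem_Ico]
              omega
            have hpos2 : lam^(k+1) + lam^(k+2) ≤ ∑ j ∈ Finset.Ico (k+1) (s+1), lam ^ j := by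
              have h1 := Finset.sum_le_sum_of_subset_of_nonneg hsub
                (fun i _ _ => pow_nonneg hlam0.le i)
              rw [Finset.sum_pair (by omega : k+1 ≠ k+2)] at h1
              exact h1
            have hlamk : (0:ℝ) ≤ lam^k := pow_nonneg hlam0.le k
            have he1 : lam^(k+1) = lam^k * lam := pow_succ lam k
            have he2 : lam^(k+2) = lam^k * lam * lam := by rw [pow_succ, pow_succ]
            rw [hsplit, hpos]
            have he1' : lam^(k+1) = 3/4 * lam^k := by
              rw [pow_succ, hlamdef]; ring
            have he2' : lam^(k+2) = 3/4 * (3/4 * lam^k) := by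
              rw [pow_succ, he1', hlamdef]; ring
            linarith [hpos2, hneg]
      · -- Branch 2 : q does not divide d_s^l
        obtain ⟨p, hp, hpfac⟩ := exists_bad_prime hq0 (hdl0 s) hdvd
        have hfs : l * ((d s).factorization p) < q.factorization p := by
          rwa [Nat.factorization_pow, Finsupp.smul_apply, smul_eq_mul] at hpfac
        set j1 := Nat.findGreatest (fun i => p ≤ M i) s with hj1def
        have hj1s : j1 ≤ s := Nat.findGreatest_le s
        have hpMle : ∀ i, 1 ≤ i → i ≤ j1 → p ≤ M i := by
          intro i h1 h2
          have h3 : p ≤ M j1 := Nat.findGreatest_of_ne_zero (P := fun i => p ≤ M i)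
            hj1def.symm (Nat.one_le_iff_ne_zero.mp (le_trans h1 h2))
          exact le_trans h3 (hmanti i j1 h2)
        have hvj1 : (d j1).factorization p = L * j1 := hdfact p hp j1 hpMle
        have hfqp : l * (L * j1) < q.factorization p := by
          have h1 : (d j1).factorization p ≤ (d s).factorization p :=
            ((Nat.factorization_le_iff_dvd (hdpos j1).ne' (hdpos s).ne').mpr
              (hdmono _ _ hj1s)) p
          calc l*(L*j1) = l * ((d j1).factorization p) := by rw [hvj1]
          _ ≤ l * ((d s).factorization p) := Nat.mul_le_mul_left l h1
          _ < q.factorization p := hfs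
        have hlev1 : ∀ j, j ≤ s → p ≤ q / Nat.gcd q ((d j)^l) ∧ ¬ q ∣ (d j)^l := by
          intro j hj
          have h2 : (d j).factorization p ≤ (d s).factorization p :=
            ((Nat.factorization_le_iff_dvd (hdpos j).ne' (hdpos s).ne').mpr
              (hdmono _ _ hj)) p
          have h3 : ((d j)^l).factorization p + 1 ≤ q.factorization p := by
            rw [Nat.factorization_pow, Finsupp.smul_apply, smul_eq_mul]
            exact Nat.succ_le_of_lt (lt_of_le_of_lt (Nat.mul_le_mul_left l h2) hfs)
          constructor
          · have h4 := r_ge q _ hq0 (hdl0 j) p hp 1 h3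
            simpa using h4
          · exact not_dvd_of_fact q _ (hdl0 j) p (Nat.lt_of_succ_le h3)
        rcases eq_or_lt_of_le hj1s with hj1eq | hj1lt
        · -- j1 = s : pure negative bound with k = s
          have hneg := hNegBlock p hp s le_rfl (fun i u v => hpMle i u (by omega)) (by
            rw [hj1eq] at hfqp; exact hfqp)
          have h1 : lam^s ≤ δ/4 := hlams
          have h2 : (0:ℝ) ≤ lam^s := pow_nonneg hlam0.le s
          linarith
        · -- j1 < s : budget bound on every level
          have hMp : M (j1+1) < p := by
            have h1 := Nat.findGreatest_is_greatest (P := fun i => p ≤ M i)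
              (by omega : Nat.findGreatest (fun i => p ≤ M i) s < j1+1) (by omega : j1+1 ≤ s)
            omega
          have hrMj : ∀ j, j ≤ s → (M (j+1) : ℝ) ≤ ((q / Nat.gcd q ((d j)^l) : ℕ) : ℝ) := by
            intro j hj
            rcases le_or_gt j1 j with hcase | hcase
            · have h1 : M (j+1) ≤ M (j1+1) := hmanti _ _ (by omega)
              have h2 : p ≤ q / Nat.gcd q ((d j)^l) := (hlev1 j hj).1
              exact Nat.cast_le.mpr (by omega)
            · -- j < j1
              obtain ⟨hr, hnd⟩ := hRlow p hp j1 hpMle hfqp j hcase.le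
              set k2 := j1 - j with hk2def
              have hk21 : 1 ≤ k2 := by omega
              have ht0 : (0:ℝ) < θ^k2 := pow_pos hθ0 k2
              have hm1 : (M (j+1):ℝ) ≤ X * θ^(j+1) + 2 := hMle _
              have hm2 : X * θ^(j1+1) ≤ (M (j1+1):ℝ) := hMge _
              have hm3 : (2:ℝ) ≤ (M (j1+1):ℝ) := by exact_mod_cast hM2 _
              have hm4 : (M (j1+1):ℝ) + 1 ≤ (p:ℝ) := by exact_mod_cast hMp
              have hp2 : (2:ℝ) ≤ (p:ℝ) := by exact_mod_cast hp.two_le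
              have hθsplit : θ^(j+1) * θ^k2 = θ^(j1+1) := by
                rw [← pow_add]
                congr 1
                omega
              have h2t : (2:ℝ) ≤ 2^(L*k2) * θ^k2 := by
                have h3 : ((2:ℝ)^(L:ℕ) * θ)^k2 = 2^(L*k2) * θ^k2 := by
                  rw [mul_pow, ← pow_mul]
                have h4 : (2:ℝ) ≤ ((2:ℝ)^(L:ℕ) * θ)^k2 := by
                  calc (2:ℝ) = 2^1 := (pow_one 2).symm
                  _ ≤ 2^k2 := pow_le_pow_right₀ (by norm_num) hk21
                  _ ≤ ((2:ℝ)^(L:ℕ) * θ)^k2 := pow_le_pow_left₀ (by norm_num) hLtheta k2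
                rw [← h3]
                exact h4
              have hθk1 : θ^k2 ≤ 1 := pow_le_one₀ hθ0.le (by linarith)
              -- M (j+1) ≤ 2^(L*k2) * M (j1+1)
              have hstep1 : (M (j+1):ℝ) * θ^k2 ≤ 2 * (M (j1+1):ℝ) := by
                calc (M (j+1):ℝ) * θ^k2 ≤ (X * θ^(j+1) + 2) * θ^k2 :=
                      mul_le_mul_of_nonneg_right hm1 ht0.le
                _ = X * θ^(j1+1) + 2 * θ^k2 := by rw [← hθsplit]; ring
                _ ≤ (M (j1+1):ℝ) + (M (j1+1):ℝ) := by
                      have h10 : 2 * θ^k2 ≤ 2 := by linarith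
                      linarith [hm2, hm3]
                _ = 2 * (M (j1+1):ℝ) := by ring
              have hstep2 : (M (j+1):ℝ) ≤ 2^(L*k2) * (M (j1+1):ℝ) := by
                have h5 : (M (j+1):ℝ) * θ^k2 ≤ (2^(L*k2) * (M (j1+1):ℝ)) * θ^k2 := by
                  calc (M (j+1):ℝ) * θ^k2 ≤ 2 * (M (j1+1):ℝ) := hstep1
                  _ ≤ (2^(L*k2) * θ^k2) * (M (j1+1):ℝ) :=
                        mul_le_mul_of_nonneg_right h2t (by positivity)
                  _ = (2^(L*k2) * (M (j1+1):ℝ)) * θ^k2 := by ring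
                exact le_of_mul_le_mul_right h5 ht0
              have hstep3 : (M (j+1):ℝ) ≤ ((p:ℝ))^(L*k2+1) := by
                have h6 : (2:ℝ)^(L*k2) ≤ (p:ℝ)^(L*k2) := pow_le_pow_left₀ (by norm_num) hp2 _
                have h7 : (0:ℝ) < (2:ℝ)^(L*k2) := by positivity
                calc (M (j+1):ℝ) ≤ 2^(L*k2) * (M (j1+1):ℝ) := hstep2
                _ ≤ (p:ℝ)^(L*k2) * (p:ℝ) := by
                      apply mul_le_mul h6 (by linarith) (by linarith) (by positivity)
                _ = (p:ℝ)^(L*k2+1) := by rw [pow_succ]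
              calc (M (j+1):ℝ) ≤ ((p:ℝ))^(L*k2+1) := hstep3
              _ = ((p^(L*k2+1) : ℕ) : ℝ) := by push_cast; ring
              _ ≤ _ := Nat.cast_le.mpr hr
          -- pointwise budget bound and sum
          have hpw : ∀ j, j ≤ s → -(δ/24 * ρ^j) ≤ lam^j * tau a b l (d j) q := by
            intro j hj
            have hnd := (hlev1 j hj).2
            have hM0 : (0:ℝ) < (M (j+1):ℝ) := by
              have := hM2 (j+1)
              exact_mod_cast (by omega : 0 < M (j+1))
            have h1 := tau_ge a b l (d j) q ha.le hb0.le hnd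
              (t := (M (j+1):ℝ)) hM0 (hrMj j hj)
            have h2 : a * (M (j+1):ℝ) ^ (-b) ≤ δ/32 * (ρ^(j+1))⁻¹ := hbudget j
            have h3 : -(δ/32 * (ρ^(j+1))⁻¹) ≤ tau a b l (d j) q := by
              calc -(δ/32 * (ρ^(j+1))⁻¹) ≤ -(a * (M (j+1):ℝ) ^ (-b)) := by linarith
              _ ≤ tau a b l (d j) q := h1
            have h4 := mul_le_mul_of_nonneg_left h3 (pow_nonneg hlam0.le j)
            have h5 : lam^j * (δ/32 * (ρ^(j+1))⁻¹) = δ/32 * (ρ^j * ρ⁻¹) := by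
              have h6 : lam^j = ρ^j * ρ^j := by rw [← mul_pow, hρsq]
              rw [h6, pow_succ, mul_inv]
              field_simp
            have h7 : δ/32 * (ρ^j * ρ⁻¹) ≤ δ/24 * ρ^j := by
              have h8 : ρ⁻¹ ≤ 4/3 := by
                rw [inv_le_comm₀ hρ0 (by norm_num)]
                linarith
              have h9 : (0:ℝ) ≤ ρ^j := pow_nonneg hρ0.le j
              have h10 : ρ^j * ρ⁻¹ ≤ ρ^j * (4/3) := mul_le_mul_of_nonneg_left h8 h9
              calc δ/32 * (ρ^j * ρ⁻¹) ≤ δ/32 * (ρ^j * (4/3)) :=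
                    mul_le_mul_of_nonneg_left h10 (by positivity)
              _ = δ/24 * ρ^j := by ring
            calc -(δ/24 * ρ^j) ≤ -(δ/32 * (ρ^j * ρ⁻¹)) := by linarith
            _ = lam^j * (-(δ/32 * (ρ^(j+1))⁻¹)) := by rw [← h5]; ring
            _ ≤ lam^j * tau a b l (d j) q := h4
          have hsum : -(δ/24 * (1-ρ)⁻¹) ≤ ∑ j ∈ Finset.range (s+1), lam^j * tau a b l (d j) q := by
            have h1 : ∑ j ∈ Finset.range (s+1), -(δ/24 * ρ^j)
                ≤ ∑ j ∈ Finset.range (s+1), lam^j * tau a b l (d j) q :=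
              Finset.sum_le_sum fun j hj => hpw j (by
                have := Finset.mem_range.mp hj; omega)
            have h2 : ∑ j ∈ Finset.range (s+1), -(δ/24 * ρ^j)
                = -(δ/24 * ∑ j ∈ Finset.range (s+1), ρ^j) := by
              rw [Finset.mul_sum, Finset.sum_neg_distrib]
            have h3 : ∑ j ∈ Finset.range (s+1), ρ^j ≤ (1-ρ)⁻¹ :=
              geom_sum_le_inv ρ hρ0.le (by linarith) _
            have h4 : δ/24 * (∑ j ∈ Finset.range (s+1), ρ^j) ≤ δ/24 * (1-ρ)⁻¹ :=
              mul_le_mul_of_nonneg_left h3 (by positivity)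
            rw [h2] at h1
            linarith
          have h5 : (1-ρ)⁻¹ ≤ 8 := by
            rw [inv_le_comm₀ (by linarith) (by norm_num)]
            linarith
          have h6 : δ/24 * (1-ρ)⁻¹ ≤ δ/3 := by
            have h7 : (0:ℝ) ≤ δ/24 := by positivity
            calc δ/24 * (1-ρ)⁻¹ ≤ δ/24 * 8 := mul_le_mul_of_nonneg_left h5 h7
            _ = δ/3 := by ring
          linarith
    -- conclude from key
    rcases le_or_gt 0 (∑ j ∈ Finset.range (s+1), lam ^ j * tau a b l (d j) q) with hS | hS
    · have h1 : (0:ℝ) ≤ (∑ j ∈ Finset.range (s+1), lam^j)⁻¹ := inv_nonneg.mpr (by linarith)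
      have h2 := mul_nonneg h1 hS
      linarith
    · have h1 : (∑ j ∈ Finset.range (s+1), lam^j)⁻¹ ≤ 1 := by
        rw [inv_le_one_iff₀]
        right
        exact hΛ1
      have h2 := mul_le_mul_of_nonpos_right h1 hS.le
      rw [one_mul] at h2
      linarith
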